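/- Let J be the ideal of ℤ[x] generated by 3(2x−1) and (2x−1)² and let R = ℤ[x]/J. Then R has exactly 4 unital subrings generated by one element, i.e., the set {S : S is a subring of R and S = ⟨a⟩₁ for some a ∈ R} has exactly 4 elements. (Since R is commutative, its unital compressed commuting graph is the complete graph with all loops on 4 vertices.) -/

import Mathlib

open Polynomial

namespace Stmt18Aux

noncomputable section

abbrev Jideal : Ideal (Polynomial ℤ) := Ideal.span {3 * (2 * X - 1), (2 * X - 1) ^ 2}

abbrev Qr : Type := Polynomial ℤ ⧸ Jideal

def mk : Polynomial ℤ →+* Qr := Ideal.Quotient.mk Jideal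

lemma mk_surjective : Function.Surjective mk := Ideal.Quotient.mk_surjective

def t : Qr := mk (2 * X - 1)
def hh : Qr := mk (3 * X - 1)
def xx : Qr := mk X

lemma memJ1 : (3 * (2 * X - 1) : ℤ[X]) ∈ Jideal := Ideal.subset_span (Set.mem_insert _ _)

lemma memJ3 : ((2 * X - 1) * (X - C 2) : ℤ[X]) ∈ Jideal := by
  rw [Ideal.mem_span_pair]
  refine ⟨X - 1, -1, ?_⟩
  have h2 : (C 2 : ℤ[X]) = 2 := by simp
  rw [h2]; ring

lemma mk_eq_zero {p : ℤ[X]} (hp : p ∈ Jideal) : mk p = 0 := Ideal.Quotient.eq_zero_iff_mem.2 hp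

lemma three_t : (3 : Qr) * t = 0 := by
  have h := mk_eq_zero memJ1
  rw [map_mul] at h
  simpa [t, map_ofNat mk 3] using h

lemma jt_zero {j : ℤ} (h : (3:ℤ) ∣ j) : (j : Qr) * t = 0 := by
  obtain ⟨c, rfl⟩ := h
  push_cast
  linear_combination (c : Qr) * three_t

/-- evaluation ring homs out of `Qr` -/
def evalHom {S : Type} [CommRing S] (s : S) (h1 : 3 * (2 * s - 1) = 0)
    (h2 : (2 * s - 1) ^ 2 = 0) : Qr →+* S :=
  Ideal.Quotient.lift Jideal (eval₂RingHom (Int.castRingHom S) s) (by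
    intro p hp
    have hK : Jideal ≤ RingHom.ker (eval₂RingHom (Int.castRingHom S) s) := by
      rw [Ideal.span_le]
      rintro f hf
      simp only [Set.mem_insert_iff, Set.mem_singleton_iff] at hf
      rcases hf with rfl | rfl <;>
      · simp only [SetLike.mem_coe, RingHom.mem_ker, coe_eval₂RingHom, eval₂_mul, eval₂_sub,
          eval₂_pow, eval₂_one, eval₂_X, eval₂_ofNat]
        first
        | exact h1
        | exact h2
    exact hK hp)

lemma evalHom_mk {S : Type} [CommRing S] (s : S) (h1 : 3 * (2 * s - 1) = 0)
    (h2 : (2 * s - 1) ^ 2 = 0) (p : ℤ[X]) :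
    evalHom s h1 h2 (mk p) = eval₂ (Int.castRingHom S) s p :=
  Ideal.Quotient.lift_mk _ _ _

def φ : Qr →+* ℚ := evalHom (1/2 : ℚ) (by norm_num) (by norm_num)

def ψ₂ : Qr →+* ZMod 9 := evalHom (2 : ZMod 9) (by decide) (by decide)

def ψ₅ : Qr →+* ZMod 9 := evalHom (5 : ZMod 9) (by decide) (by decide)

lemma φ_mk (p : ℤ[X]) : φ (mk p) = eval₂ (Int.castRingHom ℚ) (1/2 : ℚ) p := evalHom_mk _ _ _ p

lemma ψ₂_mk (p : ℤ[X]) : ψ₂ (mk p) = eval₂ (Int.castRingHom (ZMod 9)) (2 : ZMod 9) p :=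
  evalHom_mk _ _ _ p

lemma ψ₅_mk (p : ℤ[X]) : ψ₅ (mk p) = eval₂ (Int.castRingHom (ZMod 9)) (5 : ZMod 9) p :=
  evalHom_mk _ _ _ p

lemma φ_t : φ t = 0 := by
  rw [t, φ_mk]
  simp only [eval₂_mul, eval₂_sub, eval₂_one, eval₂_X, eval₂_ofNat]
  norm_num

lemma φ_hh : φ hh = 1/2 := by
  rw [hh, φ_mk]
  simp only [eval₂_mul, eval₂_sub, eval₂_one, eval₂_X, eval₂_ofNat]
  norm_num

lemma φ_xx : φ xx = 1/2 := by
  rw [xx, φ_mk, eval₂_X]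

lemma ψ₂_t : ψ₂ t = 3 := by
  rw [t, ψ₂_mk]
  simp only [eval₂_mul, eval₂_sub, eval₂_one, eval₂_X, eval₂_ofNat]
  decide

lemma ψ₅_t : ψ₅ t = 0 := by
  rw [t, ψ₅_mk]
  simp only [eval₂_mul, eval₂_sub, eval₂_one, eval₂_X, eval₂_ofNat]
  decide

lemma ψ₂_hh : ψ₂ hh = 5 := by
  rw [hh, ψ₂_mk]
  simp only [eval₂_mul, eval₂_sub, eval₂_one, eval₂_X, eval₂_ofNat]
  decide

lemma ψ₅_hh : ψ₅ hh = 5 := by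
  rw [hh, ψ₅_mk]
  simp only [eval₂_mul, eval₂_sub, eval₂_one, eval₂_X, eval₂_ofNat]
  decide

lemma ψ₂_xx : ψ₂ xx = 2 := by rw [xx, ψ₂_mk, eval₂_X]

lemma ψ₅_xx : ψ₅ xx = 5 := by rw [xx, ψ₅_mk, eval₂_X]

/-- Gauss-style lemma: an integer polynomial vanishing at `1/2` is divisible by `2X - 1`. -/
lemma L1 {p : ℤ[X]} (hp : eval₂ (Int.castRingHom ℚ) (1/2 : ℚ) p = 0) :
    ∃ g : ℤ[X], p = (2 * X - 1) * g := by
  rcases eq_or_ne p 0 with rfl | hp0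
  · exact ⟨0, by ring⟩
  have hprim : (2 * X - 1 : ℤ[X]).IsPrimitive := by
    rw [isPrimitive_iff_isUnit_of_C_dvd]
    intro r hr
    have h0 := (C_dvd_iff_dvd_coeff r _).mp hr 0
    have hc : (2 * X - 1 : ℤ[X]).coeff 0 = -1 := by
      simp [coeff_sub, coeff_one]
    rw [hc] at h0
    exact isUnit_of_dvd_unit h0 (by norm_num)
  have hroot : (X - C (1/2 : ℚ)) ∣ p.map (Int.castRingHom ℚ) := by
    rw [dvd_iff_isRoot, IsRoot, eval_map]
    exact hp
  obtain ⟨q, hq⟩ := hroot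
  have hmap2 : ((2 * X - 1 : ℤ[X]).map (Int.castRingHom ℚ)) = 2 * X - 1 := by
    simp
  have key : p.map (Int.castRingHom ℚ) =
      ((2 * X - 1 : ℤ[X]).map (Int.castRingHom ℚ)) * (C (1/2 : ℚ) * q) := by
    rw [hmap2, hq]
    have hC : (C (1/2 : ℚ) : ℚ[X]) * 2 = 1 := by
      rw [show (2 : ℚ[X]) = C 2 from (map_ofNat C 2).symm, ← C_mul]
      norm_num
    linear_combination (-(X * q) : ℚ[X]) * hC
  have hc0 : ((p.content : ℚ)) ≠ 0 := by
    exact_mod_cast content_eq_zero_iff.not.mpr hp0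
  have hcmap : p.map (Int.castRingHom ℚ) =
      C ((p.content : ℚ)) * (p.primPart).map (Int.castRingHom ℚ) := by
    conv_lhs => rw [p.eq_C_content_mul_primPart]
    rw [Polynomial.map_mul, map_C]
    rfl
  have hdvd_pp : (2 * X - 1 : ℤ[X]).map (Int.castRingHom ℚ) ∣
      (p.primPart).map (Int.castRingHom ℚ) := by
    refine ⟨C ((p.content : ℚ))⁻¹ * (C (1/2 : ℚ) * q), ?_⟩
    apply mul_left_cancel₀ (show (C ((p.content : ℚ)) : ℚ[X]) ≠ 0 by
      simpa using hc0)
    have hcc : (C ((p.content : ℚ)) : ℚ[X]) * C ((p.content : ℚ))⁻¹ = 1 := by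
      rw [← C_mul, mul_inv_cancel₀ hc0, C_1]
    calc C ((p.content : ℚ)) * (p.primPart).map (Int.castRingHom ℚ)
        = p.map (Int.castRingHom ℚ) := hcmap.symm
      _ = ((2 * X - 1 : ℤ[X]).map (Int.castRingHom ℚ)) * (C (1/2 : ℚ) * q) := key
      _ = C ((p.content : ℚ)) * (((2 * X - 1 : ℤ[X]).map (Int.castRingHom ℚ)) *
          (C ((p.content : ℚ))⁻¹ * (C (1/2 : ℚ) * q))) := by
            linear_combination (((2 * X - 1 : ℤ[X]).map (Int.castRingHom ℚ)) *
              (C (1/2 : ℚ) * q) : ℚ[X]) * hcc.symm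
  have hdvd : (2 * X - 1 : ℤ[X]) ∣ p.primPart := by
    apply hprim.dvd_of_fraction_map_dvd_fraction_map (K := ℚ)
    rwa [algebraMap_int_eq]
  obtain ⟨g, hg⟩ := hdvd.trans (primPart_dvd p)
  exact ⟨g, hg⟩

lemma t_mul (g : ℤ[X]) : t * mk g = ((g.eval 2 : ℤ) : Qr) * t := by
  obtain ⟨k, hk⟩ := (X_sub_C_dvd_sub_C_eval : (X - C (2:ℤ)) ∣ g - C (g.eval 2))
  have h1 : mk ((2*X-1) * (X - C 2)) = 0 := mk_eq_zero memJ3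
  have h2 : (2*X-1) * g = C (g.eval 2) * (2*X-1) + ((2*X-1)*(X - C 2)) * k := by
    linear_combination (2*X-1 : ℤ[X]) * hk
  have h3 : t * mk g = mk ((2*X-1) * g) := by rw [t, ← map_mul]
  have h4 : mk (C (g.eval 2)) = ((g.eval 2 : ℤ) : Qr) := by
    rw [show (C (g.eval 2) : ℤ[X]) = ((g.eval 2 : ℤ) : ℤ[X]) from eq_intCast C _, map_intCast]
  rw [h3, h2, map_add, map_mul, map_mul, h1, zero_mul, add_zero, h4]
  rfl

lemma nf0 {a : Qr} (ha : φ a = 0) : ∃ j : ℤ, a = (j : Qr) * t := by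
  obtain ⟨p, rfl⟩ := mk_surjective a
  rw [φ_mk] at ha
  obtain ⟨g, rfl⟩ := L1 ha
  refine ⟨g.eval 2, ?_⟩
  rw [map_mul, show mk (2*X-1) = t from rfl, t_mul]

lemma inj' {a b : Qr} (h1 : φ a = φ b) (h2 : ψ₂ a - ψ₅ a = ψ₂ b - ψ₅ b) : a = b := by
  have h0 : φ (a - b) = 0 := by rw [map_sub, h1, sub_self]
  obtain ⟨j, hj⟩ := nf0 h0
  have e1 : ψ₂ (a - b) - ψ₅ (a - b) = 0 := by
    rw [map_sub, map_sub]
    linear_combination h2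
  rw [hj, map_mul, map_mul, map_intCast, map_intCast, ψ₂_t, ψ₅_t] at e1
  have e2 : ((3 * j : ℤ) : ZMod 9) = 0 := by push_cast; linear_combination e1
  rw [ZMod.intCast_zmod_eq_zero_iff_dvd] at e2
  have h3 : (3:ℤ) ∣ j := by omega
  rw [jt_zero h3] at hj
  exact sub_eq_zero.mp hj

lemma dyadic (p : ℤ[X]) :
    ∃ (m : ℤ) (k : ℕ), eval₂ (Int.castRingHom ℚ) (1/2 : ℚ) p = m / 2^k := by
  induction p using Polynomial.induction_on' with
  | add p q hp hq =>
    obtain ⟨m1, k1, h1⟩ := hp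
    obtain ⟨m2, k2, h2⟩ := hq
    refine ⟨m1 * 2^k2 + m2 * 2^k1, k1 + k2, ?_⟩
    have e1 : (2:ℚ)^k1 ≠ 0 := by positivity
    have e2 : (2:ℚ)^k2 ≠ 0 := by positivity
    rw [eval₂_add, h1, h2, div_add_div _ _ e1 e2, pow_add]
    push_cast
    ring_nf
  | monomial n a =>
    refine ⟨a, n, ?_⟩
    rw [eval₂_monomial]
    simp [div_eq_mul_inv, one_div, inv_pow]

lemma reduce (r : ℚ) : ∀ (k : ℕ) (m : ℤ), r = m / 2^k →
    (∃ n : ℤ, r = (n:ℚ)) ∨ ∃ (m' : ℤ) (k' : ℕ), Odd m' ∧ r = m' / 2^(k'+1) := by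
  intro k
  induction k with
  | zero => exact fun m h => Or.inl ⟨m, by simpa using h⟩
  | succ k ih =>
    intro m h
    rcases Int.even_or_odd m with ⟨c, rfl⟩ | hodd
    · refine ih c ?_
      rw [h]
      push_cast
      have e1 : (2:ℚ)^k ≠ 0 := by positivity
      field_simp
      ring
    · exact Or.inr ⟨m, k, hodd, h⟩

lemma evalMem (s : Qr) (p : ℤ[X]) :
    eval₂ (Int.castRingHom Qr) s p ∈ Subring.closure ({s} : Set Qr) := by
  induction p using Polynomial.induction_on' with
  | add p q hp hq =>
    rw [eval₂_add]; exact add_mem hp hq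
  | monomial n a =>
    rw [eval₂_monomial]
    exact mul_mem (by simpa using intCast_mem (Subring.closure ({s}:Set Qr)) a)
      (pow_mem (Subring.subset_closure (Set.mem_singleton s)) n)

lemma top_eq : Subring.closure ({xx} : Set Qr) = ⊤ := by
  rw [eq_top_iff]
  intro a _
  obtain ⟨p, rfl⟩ := mk_surjective a
  have h1 : mk p = eval₂ (Int.castRingHom Qr) xx p := by
    have h2 : eval₂ (Int.castRingHom ℤ[X]) X p = p := by
      rw [show Int.castRingHom ℤ[X] = C from Subsingleton.elim _ _, eval₂_C_X]
    conv_lhs => rw [← h2]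
    rw [hom_eval₂]
    congr 1
  rw [h1]
  exact evalMem xx p

lemma bot_eq : Subring.closure ({0} : Set Qr) = ⊥ := by
  apply le_antisymm _ bot_le
  rw [Subring.closure_le]
  intro y hy
  rw [Set.mem_singleton_iff] at hy
  subst hy
  exact zero_mem _

lemma Ediv3 (a : Qr) : ∃ j : ℤ, ψ₂ a - ψ₅ a = ((3 * j : ℤ) : ZMod 9) := by
  obtain ⟨p, rfl⟩ := mk_surjective a
  have h2 : ψ₂ (mk p) = ((p.eval 2 : ℤ) : ZMod 9) := by
    rw [ψ₂_mk, show ((2:ZMod 9)) = (((2:ℤ) : ZMod 9)) by norm_num, eval₂_at_intCast]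
    rfl
  have h5 : ψ₅ (mk p) = ((p.eval 5 : ℤ) : ZMod 9) := by
    rw [ψ₅_mk, show ((5:ZMod 9)) = (((5:ℤ) : ZMod 9)) by norm_num, eval₂_at_intCast]
    rfl
  have hdvd : (3:ℤ) ∣ (p.eval 2 - p.eval 5) := by
    have h := Polynomial.sub_dvd_eval_sub (2:ℤ) 5 p
    have : ((2:ℤ) - 5) = -3 := by norm_num
    rw [this, neg_dvd] at h
    exact h
  obtain ⟨c, hc⟩ := hdvd
  refine ⟨c, ?_⟩
  rw [h2, h5, ← Int.cast_sub, hc]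

lemma t_of_unit {S : Subring Qr} {j : ℤ} (h3 : ¬ (3:ℤ) ∣ j) (hmem : (j:Qr) * t ∈ S) :
    t ∈ S := by
  have hsq : (3:ℤ) ∣ j * j - 1 := by
    have hji : j % 3 ≠ 0 := fun h => h3 (Int.dvd_of_emod_eq_zero h)
    have h0 : j % 3 = 1 ∨ j % 3 = 2 := by omega
    have hm : (j*j) % 3 = 1 := by
      conv_lhs => rw [Int.mul_emod]
      rcases h0 with h | h <;> rw [h] <;> norm_num
    omega
  obtain ⟨c, hc⟩ := hsq
  have hcast : (j : Qr) * (j:Qr) - 1 = 3 * (c : Qr) := by exact_mod_cast congrArg (fun z : ℤ => (z : Qr)) hc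
  have ht : t = (j : Qr) * ((j:Qr) * t) := by
    linear_combination (-t) * hcast - (c:Qr) * three_t
  rw [ht]
  exact mul_mem (intCast_mem S j) hmem

lemma t_mem {a : Qr} {m : ℤ} {k : ℕ} (hφ : φ a = m / 2^k) (hE : ψ₂ a - ψ₅ a ≠ 0) :
    t ∈ Subring.closure ({a} : Set Qr) := by
  set S := Subring.closure ({a} : Set Qr) with hS
  set c₀ : Qr := ((2^k : ℤ) : Qr) * a - ((m : ℤ) : Qr) with hc₀
  have hc₀mem : c₀ ∈ S := sub_mem (mul_mem (intCast_mem S _) (Subring.subset_closure (Set.mem_singleton a))) (intCast_mem S _)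
  have hφc : φ c₀ = 0 := by
    rw [hc₀, map_sub, map_mul, map_intCast, map_intCast, hφ]
    push_cast
    have e1 : (2:ℚ)^k ≠ 0 := by positivity
    field_simp
    ring
  obtain ⟨j, hj⟩ := nf0 hφc
  have hEc : ψ₂ c₀ - ψ₅ c₀ = ((2:ZMod 9)^k) * (ψ₂ a - ψ₅ a) := by
    rw [hc₀]
    simp only [map_sub, map_mul, map_intCast]
    push_cast
    ring
  have hEc2 : ψ₂ c₀ - ψ₅ c₀ ≠ 0 := by
    rw [hEc]
    intro h
    apply hE
    have hu : IsUnit ((2:ZMod 9)^k) := IsUnit.pow k ⟨⟨2, 5, by decide, by decide⟩, rfl⟩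
    obtain ⟨u, hu⟩ := hu
    rw [← hu] at h
    simpa using (Units.mul_right_eq_zero u).mp h
  have hj3 : ¬ (3:ℤ) ∣ j := by
    intro h3
    apply hEc2
    rw [hj, jt_zero h3, map_zero, map_zero, sub_self]
  apply t_of_unit hj3
  rw [← hj]
  exact hc₀mem

lemma half_mem {a : Qr} {m : ℤ} {k : ℕ} (hm : Odd m) (hφ : φ a = m / 2^(k+1))
    (hE : ψ₂ a - ψ₅ a = 0) : hh ∈ Subring.closure ({a} : Set Qr) := by
  have hcop : IsCoprime (m : ℤ) (2^(k+1)) := by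
    apply IsCoprime.pow_right
    rw [Int.isCoprime_iff_gcd_eq_one]
    exact Nat.coprime_two_right.mpr (Int.natAbs_odd.mpr hm)
  obtain ⟨α, β, hαβ⟩ := hcop
  set b : Qr := ((2^k * α : ℤ) : Qr) * a + ((2^k * β : ℤ) : Qr) with hb
  have hbmem : b ∈ Subring.closure ({a} : Set Qr) :=
    add_mem (mul_mem (intCast_mem _ _) (Subring.subset_closure (Set.mem_singleton a)))
      (intCast_mem _ _)
  have h2 : (2:ℚ)^(k+1) ≠ 0 := by positivity
  have hq : (α:ℚ) * m + β * 2^(k+1) = 1 := by exact_mod_cast hαβ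
  have hφ' : (2:ℚ)^(k+1) * φ a = m := by
    rw [hφ, mul_div_cancel₀ _ h2]
  have hφb : φ b = φ hh := by
    rw [φ_hh]
    have key : (2:ℚ) * φ b = 1 := by
      rw [hb, map_add, map_mul, map_intCast, map_intCast]
      push_cast
      linear_combination (α:ℚ) * hφ' + hq
    linarith
  have hEb : ψ₂ b - ψ₅ b = ψ₂ hh - ψ₅ hh := by
    rw [ψ₂_hh, ψ₅_hh, sub_self, hb]
    simp only [map_add, map_mul, map_intCast]
    linear_combination ((2^k * α : ℤ) : ZMod 9) * hE
  have : b = hh := inj' hφb hEb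
  rw [← this]
  exact hbmem

lemma classify (a : Qr) :
    Subring.closure ({a} : Set Qr) = ⊥ ∨
    Subring.closure ({a} : Set Qr) = Subring.closure ({t} : Set Qr) ∨
    Subring.closure ({a} : Set Qr) = Subring.closure ({hh} : Set Qr) ∨
    Subring.closure ({a} : Set Qr) = ⊤ := by
  obtain ⟨p, hp⟩ := mk_surjective a
  obtain ⟨m0, k0, hφ0⟩ := dyadic p
  have hφa : φ a = m0 / 2^k0 := by rw [← hp, φ_mk]; exact hφ0
  rcases reduce (φ a) k0 m0 hφa with ⟨n, hn⟩ | ⟨m, k, hm, hφa'⟩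
  · -- integer value
    have h0 : φ (a - (n : Qr)) = 0 := by rw [map_sub, map_intCast, hn, sub_self]
    obtain ⟨j, hj⟩ := nf0 h0
    have ha : a = (n:Qr) + (j:Qr) * t := by linear_combination hj
    by_cases h3 : (3:ℤ) ∣ j
    · left
      have hane : a = (n:Qr) := by rw [ha, jt_zero h3, add_zero]
      rw [hane]
      apply le_antisymm _ bot_le
      rw [Subring.closure_le]
      intro y hy
      rw [Set.mem_singleton_iff] at hy
      subst hy
      exact intCast_mem (⊥ : Subring Qr) n
    · right; left
      apply le_antisymm
      · rw [Subring.closure_le, Set.singleton_subset_iff, ha]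
        exact add_mem (intCast_mem _ _)
          (mul_mem (intCast_mem _ _) (Subring.subset_closure (Set.mem_singleton t)))
      · rw [Subring.closure_le, Set.singleton_subset_iff]
        apply t_of_unit h3
        rw [← hj]
        exact sub_mem (Subring.subset_closure (Set.mem_singleton a)) (intCast_mem _ _)
  · by_cases hE : ψ₂ a - ψ₅ a = 0
    · right; right; left
      apply le_antisymm
      · rw [Subring.closure_le, Set.singleton_subset_iff]
        have hc : eval₂ (Int.castRingHom Qr) hh p ∈ Subring.closure ({hh}:Set Qr) :=
          evalMem hh p
        have haeq : a = eval₂ (Int.castRingHom Qr) hh p := by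
          apply inj'
          · rw [← hp, φ_mk, hom_eval₂, φ_hh]
            congr 1
            exact Subsingleton.elim _ _
          · rw [hE]
            rw [hom_eval₂, hom_eval₂, ψ₂_hh, ψ₅_hh]
            rw [show ψ₂.comp (Int.castRingHom Qr) = Int.castRingHom (ZMod 9) from
              Subsingleton.elim _ _]
            rw [show ψ₅.comp (Int.castRingHom Qr) = Int.castRingHom (ZMod 9) from
              Subsingleton.elim _ _]
            rw [sub_self]
        rw [haeq]
        exact hc
      · rw [Subring.closure_le, Set.singleton_subset_iff]
        exact half_mem hm hφa' hE
    · right; right; right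
      have htmem : t ∈ Subring.closure ({a} : Set Qr) := t_mem hφa' hE
      obtain ⟨j', hEj⟩ := Ediv3 a
      set a' := a - (j':Qr) * t with ha'
      have ha'mem : a' ∈ Subring.closure ({a} : Set Qr) :=
        sub_mem (Subring.subset_closure (Set.mem_singleton a)) (mul_mem (intCast_mem _ _) htmem)
      have hφa'' : φ a' = m / 2^(k+1) := by
        rw [ha', map_sub, map_mul, map_intCast, φ_t, mul_zero, sub_zero, hφa']
      have hEa' : ψ₂ a' - ψ₅ a' = 0 := by
        rw [ha']
        simp only [map_sub, map_mul, map_intCast, ψ₂_t, ψ₅_t]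
        push_cast at hEj
        linear_combination hEj
      have hhmem : hh ∈ Subring.closure ({a} : Set Qr) := by
        have h1 : hh ∈ Subring.closure ({a'} : Set Qr) := half_mem hm hφa'' hEa'
        have hle : Subring.closure ({a'} : Set Qr) ≤ Subring.closure ({a} : Set Qr) := by
          rw [Subring.closure_le, Set.singleton_subset_iff]
          exact ha'mem
        exact hle h1
      have hxmem : xx ∈ Subring.closure ({a} : Set Qr) := by
        have hxeq : xx = hh + 2 * t := by
          apply inj'
          · rw [map_add, map_mul, φ_xx, φ_hh, φ_t, map_ofNat]
            norm_num
          · rw [map_add, map_add, map_mul, map_mul, ψ₂_xx, ψ₅_xx, ψ₂_hh, ψ₅_hh, ψ₂_t, ψ₅_t,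
              map_ofNat, map_ofNat]
            decide
        rw [hxeq]
        refine add_mem hhmem (mul_mem ?_ htmem)
        have : ((2:ℤ) : Qr) ∈ Subring.closure ({a} : Set Qr) := intCast_mem _ _
        simpa using this
      apply le_antisymm le_top
      have hle2 : Subring.closure ({xx} : Set Qr) ≤ Subring.closure ({a} : Set Qr) := by
        rw [Subring.closure_le, Set.singleton_subset_iff]
        exact hxmem
      rw [← top_eq]
      exact hle2

lemma no_half (n : ℤ) : (n:ℚ) ≠ 1/2 := by
  intro h
  have h2 : (2*n : ℤ) = 1 := by
    have : (2*n : ℚ) = 1 := by push_cast; linarith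
    exact_mod_cast this
  omega

lemma ht_not_bot : t ∉ (⊥ : Subring Qr) := by
  rw [Subring.mem_bot]
  rintro ⟨n, hn⟩
  have h1 : (3 : ZMod 9) = (n : ZMod 9) := by rw [← ψ₂_t, ← hn, map_intCast]
  have h2 : (0 : ZMod 9) = (n : ZMod 9) := by rw [← ψ₅_t, ← hn, map_intCast]
  rw [← h2] at h1
  exact absurd h1 (by decide)

lemma hh_not_bot : hh ∉ (⊥ : Subring Qr) := by
  rw [Subring.mem_bot]
  rintro ⟨n, hn⟩
  have h1 : (n:ℚ) = 1/2 := by rw [← φ_hh, ← hn, map_intCast]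
  exact no_half n h1

lemma hh_not_T : hh ∉ Subring.closure ({t} : Set Qr) := by
  intro hmem
  have hle : Subring.closure ({t}:Set Qr) ≤ (⊥ : Subring ℚ).comap φ := by
    rw [Subring.closure_le, Set.singleton_subset_iff]
    refine Subring.mem_comap.mpr (Subring.mem_bot.mpr ⟨0, ?_⟩)
    rw [φ_t]
    norm_num
  obtain ⟨nn, hnn⟩ := Subring.mem_bot.mp (Subring.mem_comap.mp (hle hmem))
  rw [φ_hh] at hnn
  exact no_half nn hnn

lemma ht_not_H : t ∉ Subring.closure ({hh} : Set Qr) := by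
  intro hmem
  have hle : Subring.closure ({hh}:Set Qr) ≤ RingHom.eqLocus ψ₂ ψ₅ := by
    rw [Subring.closure_le, Set.singleton_subset_iff]
    show ψ₂ hh = ψ₅ hh
    rw [ψ₂_hh, ψ₅_hh]
  have heq : ψ₂ t = ψ₅ t := hle hmem
  rw [ψ₂_t, ψ₅_t] at heq
  exact absurd heq (by decide)

end

end Stmt18Aux

open Stmt18Aux in
/-- The quotient of `ℤ[x]` by the ideal generated by `3(2x-1)` and `(2x-1)²` has
exactly `4` one-generated unital subrings. -/
theorem stmt_18 :
    Nat.card {S : Subring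
        (Polynomial ℤ ⧸ (Ideal.span {3 * (2 * X - 1), (2 * X - 1) ^ 2} : Ideal (Polynomial ℤ))) |
      ∃ a, S = Subring.closure {a}} = 4 := by
  have hset : {S : Subring Qr | ∃ a, S = Subring.closure {a}} =
      {⊥, Subring.closure ({t} : Set Qr), Subring.closure ({hh} : Set Qr), ⊤} := by
    ext S
    simp only [Set.mem_setOf_eq, Set.mem_insert_iff, Set.mem_singleton_iff]
    constructor
    · rintro ⟨a, rfl⟩
      exact classify a
    · rintro (rfl | rfl | rfl | rfl)
      · exact ⟨0, bot_eq.symm⟩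
      · exact ⟨t, rfl⟩
      · exact ⟨hh, rfl⟩
      · exact ⟨xx, top_eq.symm⟩
  have d1 : (⊥ : Subring Qr) ≠ Subring.closure ({t} : Set Qr) := by
    intro h
    exact ht_not_bot (by rw [h]; exact Subring.subset_closure (Set.mem_singleton t))
  have d2 : (⊥ : Subring Qr) ≠ Subring.closure ({hh} : Set Qr) := by
    intro h
    exact hh_not_bot (by rw [h]; exact Subring.subset_closure (Set.mem_singleton hh))
  have d3 : (⊥ : Subring Qr) ≠ ⊤ := by
    intro h
    exact ht_not_bot (by rw [h]; trivial)
  have d4 : Subring.closure ({t} : Set Qr) ≠ Subring.closure ({hh} : Set Qr) := by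
    intro h
    exact ht_not_H (by rw [← h]; exact Subring.subset_closure (Set.mem_singleton t))
  have d5 : Subring.closure ({t} : Set Qr) ≠ ⊤ := by
    intro h
    exact hh_not_T (by rw [h]; trivial)
  have d6 : Subring.closure ({hh} : Set Qr) ≠ ⊤ := by
    intro h
    exact ht_not_H (by rw [h]; trivial)
  rw [hset, Nat.card_coe_set_eq]
  rw [Set.ncard_insert_of_notMem (by simp [d1, d2, d3]) (Set.toFinite _),
    Set.ncard_insert_of_notMem (by simp [d4, d5]) (Set.toFinite _),
    Set.ncard_pair d6]
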